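/- If X is a locally compact Hausdorff space, then |X| ≤ wL(X)^(ψ(X)). -/

import Mathlib

open Cardinal Set

universe u

section Defs
variable (X : Type u) [TopologicalSpace X]

/-- An open cover of the whole space. -/
def IsOpenCover (𝒰 : Set (Set X)) : Prop := (∀ U ∈ 𝒰, IsOpen U) ∧ ⋃₀ 𝒰 = Set.univ

/-- The cellularity: supremum of cardinalities of pairwise disjoint families of nonempty
open sets, plus `ℵ₀`. -/
noncomputable def cellularity : Cardinal.{u} :=
  max ℵ₀ (⨆ 𝒰 : {𝒰 : Set (Set X) // (∀ U ∈ 𝒰, IsOpen U ∧ U.Nonempty) ∧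
    𝒰.PairwiseDisjoint id}, #𝒰.1)

/-- The weak Lindelöf degree. -/
noncomputable def wLdeg : Cardinal.{u} :=
  sInf {κ | ℵ₀ ≤ κ ∧ ∀ 𝒰 : Set (Set X), IsOpenCover X 𝒰 →
    ∃ 𝒱 ⊆ 𝒰, #𝒱 ≤ κ ∧ Dense (⋃₀ 𝒱)}

/-- The tightness. -/
noncomputable def tightness : Cardinal.{u} :=
  sInf {κ | ℵ₀ ≤ κ ∧ ∀ (A : Set X) (x : X), x ∈ closure A →
    ∃ B ⊆ A, #B ≤ κ ∧ x ∈ closure B}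

/-- The π-character. -/
noncomputable def piCharacter : Cardinal.{u} :=
  sInf {κ | ℵ₀ ≤ κ ∧ ∀ x : X, ∃ 𝒬 : Set (Set X), #𝒬 ≤ κ ∧
    (∀ P ∈ 𝒬, IsOpen P ∧ P.Nonempty) ∧
    ∀ U : Set X, IsOpen U → x ∈ U → ∃ P ∈ 𝒬, P ⊆ U}

/-- The pseudocharacter. -/
noncomputable def pseudoChar : Cardinal.{u} :=
  sInf {κ | ℵ₀ ≤ κ ∧ ∀ x : X, ∃ 𝒱 : Set (Set X), #𝒱 ≤ κ ∧
    (∀ V ∈ 𝒱, IsOpen V ∧ x ∈ V) ∧ ⋂₀ 𝒱 = {x}}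

/-- The closed pseudocharacter. -/
noncomputable def closedPseudoChar : Cardinal.{u} :=
  sInf {κ | ℵ₀ ≤ κ ∧ ∀ x : X, ∃ 𝒱 : Set (Set X), #𝒱 ≤ κ ∧
    (∀ V ∈ 𝒱, IsOpen V ∧ x ∈ V) ∧ (⋂ V ∈ 𝒱, closure V) = {x}}

/-- The density. -/
noncomputable def densityCard : Cardinal.{u} :=
  sInf {κ | ℵ₀ ≤ κ ∧ ∃ D : Set X, #D ≤ κ ∧ Dense D}

/-- The star of a set `A` with respect to a family `𝒰`. -/
def st (A : Set X) (𝒰 : Set (Set X)) : Set X := ⋃₀ {U | U ∈ 𝒰 ∧ (A ∩ U).Nonempty}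

/-- The θ-closure of a set. -/
def thetaClosure (A : Set X) : Set X :=
  {x | ∀ U : Set X, IsOpen U → x ∈ U → (closure U ∩ A).Nonempty}

/-- The θ-density. -/
noncomputable def thetaDensityCard : Cardinal.{u} :=
  sInf {κ | ℵ₀ ≤ κ ∧ ∃ D : Set X, #D ≤ κ ∧ thetaClosure X D = Set.univ}

/-- A discrete family of sets: each point has a neighborhood meeting at most one member. -/
def IsDiscreteFamily (𝒰 : Set (Set X)) : Prop :=
  ∀ x : X, ∃ V : Set X, IsOpen V ∧ x ∈ V ∧ {U | U ∈ 𝒰 ∧ (V ∩ U).Nonempty}.Subsingleton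

/-- Countable discrete cellularity. -/
def CDC : Prop :=
  ∀ 𝒰 : Set (Set X), (∀ U ∈ 𝒰, IsOpen U ∧ U.Nonempty) → IsDiscreteFamily X 𝒰 → 𝒰.Countable

/-- Star-cdc: every open cover has a cdc subspace whose star covers the space. -/
def StarCDC : Prop :=
  ∀ 𝒰 : Set (Set X), IsOpenCover X 𝒰 → ∃ Y : Set X, CDC ↥Y ∧ st X Y 𝒰 = Set.univ

/-- H-closed space: every open cover has a finite subfamily with dense union. -/
def IsHClosedSpace : Prop :=
  ∀ 𝒰 : Set (Set X), IsOpenCover X 𝒰 → ∃ 𝒱 ⊆ 𝒰, 𝒱.Finite ∧ Dense (⋃₀ 𝒱)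

/-- Countable cellularity (ccc). -/
def CCCSpace : Prop :=
  ∀ 𝒰 : Set (Set X), (∀ U ∈ 𝒰, IsOpen U ∧ U.Nonempty) → 𝒰.PairwiseDisjoint id → 𝒰.Countable

/-- Weakly Lindelöf space. -/
def WeaklyLindelof : Prop :=
  ∀ 𝒰 : Set (Set X), IsOpenCover X 𝒰 → ∃ 𝒱 ⊆ 𝒰, 𝒱.Countable ∧ Dense (⋃₀ 𝒱)

/-- Almost Lindelöf space. -/
def AlmostLindelof : Prop :=
  ∀ 𝒰 : Set (Set X), IsOpenCover X 𝒰 → ∃ 𝒱 ⊆ 𝒰, 𝒱.Countable ∧ (⋃ V ∈ 𝒱, closure V) = Set.univ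

/-- A π-base: a family of nonempty open sets such that every nonempty open set contains one. -/
def IsPiBase (ℬ : Set (Set X)) : Prop :=
  (∀ B ∈ ℬ, IsOpen B ∧ B.Nonempty) ∧
  ∀ U : Set X, IsOpen U → U.Nonempty → ∃ B ∈ ℬ, B ⊆ U

/-- Power homogeneous: some power of `X` is homogeneous. -/
def PowerHomogeneous : Prop :=
  ∃ ι : Type u, ∀ x y : ι → X, ∃ h : (ι → X) ≃ₜ (ι → X), h x = y

/-- A strong `G_δ`-diagonal of rank 2. -/
def HasStrongRank2Diagonal : Prop :=
  ∃ 𝒰 : ℕ → Set (Set X), (∀ n, IsOpenCover X (𝒰 n)) ∧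
    ∀ x : X, (⋂ n, closure (st X (st X {x} (𝒰 n)) (𝒰 n))) = {x}

/-- A `G_δ`-diagonal of rank 2. -/
def HasRank2Diagonal : Prop :=
  ∃ 𝒰 : ℕ → Set (Set X), (∀ n, IsOpenCover X (𝒰 n)) ∧
    ∀ x : X, (⋂ n, st X (st X {x} (𝒰 n)) (𝒰 n)) = {x}

/-- A `G_δ`-diagonal of rank 3. -/
def HasRank3Diagonal : Prop :=
  ∃ 𝒰 : ℕ → Set (Set X), (∀ n, IsOpenCover X (𝒰 n)) ∧
    ∀ x : X, (⋂ n, st X (st X (st X {x} (𝒰 n)) (𝒰 n)) (𝒰 n)) = {x}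

/-- Basically disconnected: the closure of every cozero set is open. -/
def BasicallyDisconnected : Prop :=
  ∀ f : C(X, ℝ), IsOpen (closure {x | f x ≠ 0})

end Defs


section Aux
variable {X : Type u} [TopologicalSpace X] {lam : Cardinal.{u}}

lemma mk_finset_le' (α : Type u) : #(Finset α) ≤ max ℵ₀ #α := by
  cases finite_or_infinite α
  · exact le_max_of_le_left (mk_le_aleph0)
  · exact le_max_of_le_right (mk_finset_of_infinite α).le

lemma mk_iUnion_le_of {ι α : Type u} {f : ι → Set α} {c : Cardinal.{u}}
    (h : ∀ i, #(f i) ≤ c) : #(⋃ i, f i) ≤ #ι * c := by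
  refine (mk_iUnion_le f).trans (mul_le_mul' le_rfl ?_)
  cases isEmpty_or_nonempty ι
  · simp [ciSup_of_empty]
  · exact ciSup_le' h

def HasSmallBase (X : Type u) [TopologicalSpace X] (lam : Cardinal.{u}) : Prop :=
  ∀ x : X, ∃ 𝔅 : Set (Set X), #𝔅 ≤ lam ∧ (∀ B ∈ 𝔅, IsOpen B ∧ x ∈ B) ∧
    ∀ U : Set X, IsOpen U → x ∈ U → ∃ B ∈ 𝔅, B ⊆ U

lemma tight_of_base (hb : HasSmallBase X lam) {A : Set X} {x : X}
    (hx : x ∈ closure A) : ∃ B ⊆ A, #B ≤ lam ∧ x ∈ closure B := by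
  obtain ⟨𝔅, hcard, hmem, hbase⟩ := hb x
  have hsel : ∀ B : ↥𝔅, ∃ z, z ∈ (B : Set X) ∩ A := by
    rintro ⟨B, hB⟩
    exact mem_closure_iff.1 hx B (hmem B hB).1 (hmem B hB).2
  choose f hf using hsel
  refine ⟨range f, ?_, (mk_range_le).trans hcard, ?_⟩
  · rintro z ⟨B, rfl⟩; exact (hf B).2
  · rw [mem_closure_iff]
    intro U hU hxU
    obtain ⟨B, hB, hBU⟩ := hbase U hU hxU
    exact ⟨f ⟨B, hB⟩, hBU (hf ⟨B, hB⟩).1, mem_range_self _⟩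

lemma psc_of_base [T1Space X] [RegularSpace X] (hb : HasSmallBase X lam) (x : X) :
    ∃ 𝒱 : Set (Set X), #𝒱 ≤ lam ∧ (∀ V ∈ 𝒱, IsOpen V ∧ x ∈ V) ∧
      (⋂ V ∈ 𝒱, closure V) = {x} := by
  obtain ⟨𝔅, hcard, hmem, hbase⟩ := hb x
  refine ⟨𝔅, hcard, hmem, ?_⟩
  apply Subset.antisymm
  · intro y hy
    by_contra hne
    have hyx : x ≠ y := fun h => hne (by simp [h])
    have hopen : IsOpen ({y}ᶜ : Set X) := isOpen_compl_singleton
    have hxin : x ∈ ({y}ᶜ : Set X) := by simpa using hyx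
    obtain ⟨t, ht, htc, hts⟩ := exists_mem_nhds_isClosed_subset (hopen.mem_nhds hxin)
    obtain ⟨B, hB, hBt⟩ := hbase (interior t) isOpen_interior (mem_interior_iff_mem_nhds.2 ht)
    have : y ∈ closure B := by
      simp only [mem_iInter] at hy
      exact hy B hB
    have : y ∈ t := by
      have := (closure_mono hBt).trans (closure_minimal interior_subset htc) this
      exact this
    exact hts this rfl
  · intro y hy
    simp only [mem_singleton_iff] at hy
    subst hy
    exact mem_iInter₂.2 fun B hB => subset_closure (hmem B hB).2

lemma sapirovskii [T1Space X] [RegularSpace X] (hlam : ℵ₀ ≤ lam)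
    (hb : HasSmallBase X lam) (A : Set X) :
    #(closure A) ≤ (max #A ℵ₀) ^ lam := by
  set M := max #A ℵ₀ with hM
  -- choose tightness witnesses and closed-psc families
  have h1 : ∀ x : ↥(closure A), ∃ B, B ⊆ A ∧ #B ≤ lam ∧ (x : X) ∈ closure B := by
    intro x
    obtain ⟨B, h1, h2, h3⟩ := tight_of_base hb x.2
    exact ⟨B, h1, h2, h3⟩
  choose Bf hBA hBcard hBcl using h1
  have h2 := fun x : ↥(closure A) => psc_of_base hb (x : X)
  choose Vf hVcard hVmem hVint using h2
  set Ff : ↥(closure A) → Set (Set X) := fun x => (fun V => Bf x ∩ V) '' Vf x with hFf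
  have hkey : ∀ x : ↥(closure A), (⋂ S ∈ Ff x, closure S) = {(x : X)} := by
    intro x
    apply Subset.antisymm
    · intro z hz
      rw [← hVint x]
      refine mem_iInter₂.2 fun V hV => ?_
      have : z ∈ closure (Bf x ∩ V) :=
        mem_iInter₂.1 hz _ ⟨V, hV, rfl⟩
      exact closure_mono inter_subset_right this
    · intro z hz
      simp only [mem_singleton_iff] at hz
      subst hz
      refine mem_iInter₂.2 ?_
      rintro S ⟨V, hV, rfl⟩
      have hxV : (x : X) ∈ V := (hVmem x V hV).2
      have : (x : X) ∈ V ∩ closure (Bf x) := ⟨hxV, hBcl x⟩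
      have := (hVmem x V hV).1.inter_closure this
      rwa [inter_comm] at this
  set P := {t : Set X // t ⊆ A ∧ #t ≤ lam} with hP
  have hFfP : ∀ (x : ↥(closure A)) (S : Set X), S ∈ Ff x → S ⊆ A ∧ #S ≤ lam := by
    rintro x S ⟨V, hV, rfl⟩
    exact ⟨inter_subset_left.trans (hBA x),
      (mk_le_mk_of_subset inter_subset_left).trans (hBcard x)⟩
  have hcardF : ∀ x : ↥(closure A), #{p : P | p.1 ∈ Ff x} ≤ lam := by
    intro x
    have : #{p : P | p.1 ∈ Ff x} ≤ #(Ff x) := by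
      refine mk_le_of_injective (f := fun p => (⟨p.1.1, p.2⟩ : ↥(Ff x))) ?_
      rintro ⟨⟨s, hs⟩, hs2⟩ ⟨⟨t, ht⟩, ht2⟩ h
      simp only [Subtype.mk.injEq] at h
      simp [Subtype.ext_iff, h]
    exact this.trans ((mk_image_le).trans (hVcard x))
  set G : ↥(closure A) → {u : Set P // #u ≤ lam} :=
    fun x => ⟨{p : P | p.1 ∈ Ff x}, hcardF x⟩ with hG
  have hGinj : Function.Injective G := by
    intro x y hxy
    have hFeq : Ff x = Ff y := by
      ext S
      constructor
      · intro hS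
        have hp : (⟨S, hFfP x S hS⟩ : P) ∈ {p : P | p.1 ∈ Ff x} := hS
        rw [hG] at hxy
        simp only [Subtype.mk.injEq] at hxy
        have := hxy ▸ hp
        exact this
      · intro hS
        have hp : (⟨S, hFfP y S hS⟩ : P) ∈ {p : P | p.1 ∈ Ff y} := hS
        rw [hG] at hxy
        simp only [Subtype.mk.injEq] at hxy
        have := hxy.symm ▸ hp
        exact this
    have : ({(x : X)} : Set X) = {(y : X)} := by
      rw [← hkey x, ← hkey y, hFeq]
    exact Subtype.ext (singleton_eq_singleton_iff.1 this)
  have hc1 : #(closure A) ≤ #{u : Set P // #u ≤ lam} := mk_le_of_injective hGinj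
  have hc2 : #{u : Set P // #u ≤ lam} ≤ max #P ℵ₀ ^ lam := mk_bounded_set_le P lam
  have hc3 : #P ≤ M ^ lam := mk_bounded_subset_le A lam
  have hMlam : ℵ₀ ≤ M ^ lam := by
    calc ℵ₀ ≤ M := le_max_right _ _
    _ ≤ M ^ lam := self_le_power M (one_le_aleph0.trans hlam)
  calc #(closure A) ≤ max #P ℵ₀ ^ lam := hc1.trans hc2
    _ ≤ (M ^ lam) ^ lam := by
        refine power_le_power_right ?_
        exact max_le hc3 hMlam
    _ = M ^ (lam * lam) := by rw [power_mul]
    _ = M ^ lam := by rw [mul_eq_self hlam]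

lemma smallBase_subtype (hb : HasSmallBase X lam) (S : Set X) :
    HasSmallBase ↥S lam := by
  intro x
  obtain ⟨𝔅, hcard, hmem, hbase⟩ := hb (x : X)
  refine ⟨(fun B => ((↑) ⁻¹' B : Set ↥S)) '' 𝔅, (mk_image_le).trans hcard, ?_, ?_⟩
  · rintro B ⟨C, hC, rfl⟩
    exact ⟨(hmem C hC).1.preimage continuous_subtype_val, (hmem C hC).2⟩
  · intro U hU hxU
    obtain ⟨O, hO, rfl⟩ := isOpen_induced_iff.1 hU
    obtain ⟨B, hB, hBO⟩ := hbase O hO hxU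
    exact ⟨(↑) ⁻¹' B, ⟨B, hB, rfl⟩, preimage_mono hBO⟩

lemma smallBase_of_pseudo [T2Space X] [LocallyCompactSpace X]
    (hlam : ℵ₀ ≤ lam)
    (hpsi : ∀ x : X, ∃ 𝒱 : Set (Set X), #𝒱 ≤ lam ∧
      (∀ V ∈ 𝒱, IsOpen V ∧ x ∈ V) ∧ ⋂₀ 𝒱 = {x}) :
    HasSmallBase X lam := by
  intro x
  obtain ⟨K, hKc, hKn⟩ := exists_compact_mem_nhds x
  obtain ⟨𝒱, hVcard, hVmem, hVint⟩ := hpsi x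
  -- shrink each V to an open W with closure ⊆ V
  have hW : ∀ V : ↥𝒱, ∃ W : Set X, IsOpen W ∧ x ∈ W ∧ closure W ⊆ (V : Set X) := by
    rintro ⟨V, hV⟩
    obtain ⟨t, ht, htc, hts⟩ :=
      exists_mem_nhds_isClosed_subset ((hVmem V hV).1.mem_nhds (hVmem V hV).2)
    exact ⟨interior t, isOpen_interior, mem_interior_iff_mem_nhds.2 ht,
      (closure_minimal interior_subset htc).trans hts⟩
  choose W hWo hWx hWcl using hW
  refine ⟨range (fun F : Finset ↥𝒱 => interior K ∩ ⋂ V ∈ F, W V),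
    (mk_range_le).trans ((mk_finset_le' _).trans (max_le hlam hVcard)), ?_, ?_⟩
  · rintro B ⟨F, rfl⟩
    constructor
    · exact isOpen_interior.inter (F.finite_toSet.isOpen_biInter fun V _ => hWo V)
    · exact ⟨mem_interior_iff_mem_nhds.2 hKn, mem_iInter₂.2 fun V _ => hWx V⟩
  · intro U hU hxU
    have hCcomp : IsCompact (K \ U) := hKc.diff hU
    have hempty : (K \ U) ∩ ⋂ V : ↥𝒱, closure (W V) = ∅ := by
      ext z
      simp only [mem_inter_iff, mem_iInter, mem_empty_iff_false, iff_false, not_and]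
      intro hzC hz
      have : z ∈ ⋂₀ 𝒱 := by
        refine mem_sInter.2 fun V hV => hWcl ⟨V, hV⟩ (hz ⟨V, hV⟩)
      rw [hVint] at this
      rw [mem_singleton_iff] at this
      subst this
      exact hzC.2 hxU
    obtain ⟨F, hF⟩ := hCcomp.elim_finite_subfamily_closed
      (fun V : ↥𝒱 => closure (W V)) (fun V => isClosed_closure) hempty
    refine ⟨interior K ∩ ⋂ V ∈ F, W V, mem_range_self F, ?_⟩
    intro z hz
    by_contra hzU
    have hzK : z ∈ K := interior_subset hz.1
    have : z ∈ (K \ U) ∩ ⋂ V ∈ F, closure (W V) := by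
      refine ⟨⟨hzK, hzU⟩, mem_iInter₂.2 fun V hV => subset_closure (mem_iInter₂.1 hz.2 V hV)⟩
    rw [hF] at this
    exact this

noncomputable def iterSet {α : Type u} (step : Set α → Set α) (o : Ordinal.{u}) : Set α :=
  step (⋃ o' : Iio o, iterSet step o'.1)
termination_by o
decreasing_by exact o'.2

lemma iterSet_def {α : Type u} (step : Set α → Set α) (o : Ordinal.{u}) :
    iterSet step o = step (⋃ o' : Iio o, iterSet step o'.1) := by
  rw [iterSet]

lemma iterSet_mono {α : Type u} {step : Set α → Set α} (hstep : ∀ S, S ⊆ step S)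
    {o1 o2 : Ordinal.{u}} (h : o1 ≤ o2) : iterSet step o1 ⊆ iterSet step o2 := by
  rcases eq_or_lt_of_le h with rfl | h
  · exact subset_rfl
  · rw [iterSet_def step o2]
    refine subset_trans ?_ (hstep _)
    exact subset_iUnion_of_subset ⟨o1, h⟩ subset_rfl

-- reindex a union over Iio o by o.ToType
lemma iUnion_Iio_eq {α : Type u} (f : Ordinal.{u} → Set α) (o : Ordinal.{u}) :
    (⋃ o' : Iio o, f o'.1) =
      ⋃ i : o.ToType, f ((Ordinal.ToType.mk (o := o)).symm i).1 := by
  exact (Function.Surjective.iUnion_comp ((Ordinal.ToType.mk (o := o)).symm.surjective) (fun o' : Iio o => f o'.1)).symm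

lemma mk_iUnion_Iio_le {α : Type u} (f : Ordinal.{u} → Set α) (o : Ordinal.{u})
    {c : Cardinal.{u}} (h : ∀ o' < o, #(f o') ≤ c) :
    #(⋃ o' : Iio o, f o'.1) ≤ o.card * c := by
  rw [iUnion_Iio_eq]
  
  calc #(⋃ i : o.ToType, f ((Ordinal.ToType.mk (o := o)).symm i).1)
      ≤ #o.ToType * c := by
        refine (mk_iUnion_le _).trans (mul_le_mul' le_rfl ?_)
        cases isEmpty_or_nonempty o.ToType
        · simp [ciSup_of_empty]
        · exact ciSup_le' fun i => h _ ((Ordinal.ToType.mk (o := o)).symm i).2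
    _ = o.card * c := by rw [Cardinal.mk_toType]

lemma compact_card_le {K : Type u} [TopologicalSpace K] [CompactSpace K] [T2Space K]
    {lam : Cardinal.{u}} (hlam : ℵ₀ ≤ lam) (hb : HasSmallBase K lam) :
    #K ≤ 2 ^ lam := by
  cases isEmpty_or_nonempty K
  · exact le_trans (le_of_eq (mk_eq_zero K)) zero_le
  set μ : Cardinal.{u} := 2 ^ lam with hμ
  have hlamμ : lam ≤ μ := (cantor lam).le
  have hμinf : ℵ₀ ≤ μ := hlam.trans hlamμ
  have hμlam : μ ^ lam = μ := by rw [hμ, ← power_mul, mul_eq_self hlam]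
  choose b hbc hbm hbb using hb
  have hbase : HasSmallBase K lam := fun x => ⟨b x, hbc x, hbm x, hbb x⟩
  -- witness function
  have hwex : ∀ 𝒰 : Set (Set K), ∃ z : K, ⋃₀ 𝒰 ≠ Set.univ → z ∉ ⋃₀ 𝒰 := by
    intro 𝒰
    by_cases h : ⋃₀ 𝒰 = Set.univ
    · exact ⟨Classical.arbitrary K, fun h' => absurd h h'⟩
    · obtain ⟨z, hz⟩ := nonempty_compl.2 h
      exact ⟨z, fun _ => hz⟩
  choose w hw using hwex
  set Wit : Set K → Set (Set (Set K)) := fun S =>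
    {𝒰 : Set (Set K) | 𝒰 ⊆ (⋃ x ∈ S, b x) ∧ 𝒰.Finite ∧ ⋃₀ 𝒰 ≠ Set.univ} with hWit
  set step : Set K → Set K := fun S => closure (S ∪ w '' Wit S) with hstepdef
  have hstep_sub : ∀ S, S ⊆ step S := fun S =>
    subset_union_left.trans subset_closure
  -- cardinality of one step
  have hstepcard : ∀ S : Set K, #S ≤ μ → #(step S) ≤ μ := by
    intro S hS
    have hBB : #(⋃ x ∈ S, b x) ≤ μ := by
      rw [biUnion_eq_iUnion]
      calc #(⋃ x : ↥S, b x.1) ≤ #↥S * lam := by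
            refine (mk_iUnion_le _).trans (mul_le_mul' le_rfl ?_)
            cases isEmpty_or_nonempty ↥S
            · simp [ciSup_of_empty]
            · exact ciSup_le' fun i => hbc _
        _ ≤ μ * μ := mul_le_mul' hS hlamμ
        _ = μ := mul_eq_self hμinf
    have hWitcard : #(Wit S) ≤ μ := by
      have hsub : Wit S ⊆ {𝒰 : Set (Set K) | 𝒰 ⊆ (⋃ x ∈ S, b x) ∧ #𝒰 ≤ lam} := by
        rintro 𝒰 ⟨h1, h2, _⟩
        exact ⟨h1, h2.lt_aleph0.le.trans hlam⟩
      calc #(Wit S) ≤ #{𝒰 : Set (Set K) // 𝒰 ⊆ (⋃ x ∈ S, b x) ∧ #𝒰 ≤ lam} :=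
            mk_le_mk_of_subset hsub
        _ ≤ max #(⋃ x ∈ S, b x) ℵ₀ ^ lam := mk_bounded_subset_le _ lam
        _ ≤ μ ^ lam := power_le_power_right (max_le hBB hμinf)
        _ = μ := hμlam
    have hcore : #(S ∪ w '' Wit S : Set K) ≤ μ := by
      calc #(S ∪ w '' Wit S : Set K) ≤ #S + #(w '' Wit S) := mk_union_le _ _
        _ ≤ μ + μ := add_le_add hS (mk_image_le.trans hWitcard)
        _ = μ := add_eq_self hμinf
    calc #(step S) ≤ (max #(S ∪ w '' Wit S : Set K) ℵ₀) ^ lam :=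
          sapirovskii hlam hbase _
      _ ≤ μ ^ lam := power_le_power_right (max_le hcore hμinf)
      _ = μ := hμlam
  set A : Ordinal.{u} → Set K := iterSet step with hA
  set top : Ordinal.{u} := (Order.succ lam).ord with htop
  have hlim : Order.IsSuccLimit top := Cardinal.isSuccLimit_ord (hlam.trans (Order.le_succ lam))
  have hAcard : ∀ o < top, #(A o) ≤ μ := by
    intro o
    induction o using Ordinal.induction with
    | _ o IH =>
      intro ho
      rw [hA, iterSet_def]
      apply hstepcard
      calc #(⋃ o' : Iio o, iterSet step o'.1) ≤ o.card * μ :=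
            mk_iUnion_Iio_le _ o fun o' h => IH o' h (h.trans ho)
        _ ≤ μ * μ := by
            refine mul_le_mul' ?_ le_rfl
            have := Cardinal.lt_ord.1 ho
            exact ((Order.lt_succ_iff).1 this).trans hlamμ
        _ = μ := mul_eq_self hμinf
  set Atop : Set K := ⋃ o : Iio top, A o.1 with hAtop
  have hAsub : ∀ o < top, A o ⊆ Atop := fun o ho =>
    subset_iUnion_of_subset ⟨o, ho⟩ subset_rfl
  have hclosed : IsClosed Atop := by
    rw [← closure_subset_iff_isClosed]
    intro x hx
    obtain ⟨B, hBsub, hBcard, hBcl⟩ := tight_of_base hbase hx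
    have hg : ∀ z : ↥B, ∃ o : Ordinal.{u}, o < top ∧ (z : K) ∈ A o := by
      intro z
      obtain ⟨⟨o, ho⟩, hzo⟩ := mem_iUnion.1 (hBsub z.2)
      exact ⟨o, ho, hzo⟩
    choose g hg1 hg2 using hg
    have hcof : iSup g < top := by
      refine Ordinal.iSup_lt_ord ?_ hg1
      rw [htop, (Cardinal.isRegular_succ hlam).cof_eq]
      exact hBcard.trans_lt (Order.lt_succ lam)
    have hBA : B ⊆ A (Order.succ (iSup g)) := by
      intro z hz
      have h1 : g ⟨z, hz⟩ ≤ iSup g := Ordinal.le_iSup g _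
      exact iterSet_mono hstep_sub (h1.trans (Order.le_succ _)) (hg2 ⟨z, hz⟩)
    have h2 : closure (A (Order.succ (iSup g))) ⊆ A (Order.succ (Order.succ (iSup g))) := by
      conv_rhs => rw [hA, iterSet_def]
      have hsub2 : A (Order.succ (iSup g)) ⊆
          ⋃ o' : Iio (Order.succ (Order.succ (iSup g))), iterSet step o'.1 :=
        subset_iUnion_of_subset ⟨Order.succ (iSup g), Set.mem_Iio.2 (Order.lt_succ _)⟩ subset_rfl
      calc closure (A (Order.succ (iSup g)))
          ⊆ closure (⋃ o' : Iio (Order.succ (Order.succ (iSup g))), iterSet step o'.1) :=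
            closure_mono hsub2
        _ ⊆ step (⋃ o' : Iio (Order.succ (Order.succ (iSup g))), iterSet step o'.1) := by
            rw [hstepdef]
            exact closure_mono subset_union_left
    have hfin : Order.succ (Order.succ (iSup g)) < top :=
      hlim.succ_lt (hlim.succ_lt hcof)
    exact hAsub _ hfin (h2 (closure_mono hBA hBcl))
  -- Atop is everything
  have huniv : Atop = Set.univ := by
    by_contra hne
    obtain ⟨x, hx⟩ := (ne_univ_iff_exists_notMem _).1 hne
    have hAcomp : IsCompact Atop := hclosed.isCompact
    have hU : ∀ a : ↥Atop, ∃ U ∈ b (a : K), U ⊆ {x}ᶜ := by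
      intro a
      refine hbb (a : K) {x}ᶜ isOpen_compl_singleton ?_
      simp only [mem_compl_iff, mem_singleton_iff]
      intro h; exact hx (h ▸ a.2)
    choose U hUb hUx using hU
    have hopen : ∀ a : ↥Atop, IsOpen (U a) := fun a => (hbm _ _ (hUb a)).1
    have hcover : Atop ⊆ ⋃ a : ↥Atop, U a := by
      intro z hz
      exact mem_iUnion.2 ⟨⟨z, hz⟩, (hbm _ _ (hUb ⟨z, hz⟩)).2⟩
    obtain ⟨t, ht⟩ := hAcomp.elim_finite_subcover U hopen hcover
    -- stages of the finitely many points
    have hstg : ∀ a : ↥Atop, ∃ o : Ordinal.{u}, o < top ∧ (a : K) ∈ A o := by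
      intro a
      obtain ⟨⟨o, ho⟩, hzo⟩ := mem_iUnion.1 a.2
      exact ⟨o, ho, hzo⟩
    choose st hst1 hst2 using hstg
    set o1 : Ordinal.{u} := t.sup st with ho1
    have ho1top : o1 < top := by
      rw [ho1, Finset.sup_lt_iff (hlim.pos)]
      exact fun a _ => hst1 a
    set UU : Set K := ⋃ o' : Iio (Order.succ o1), iterSet step o'.1 with hUU
    set 𝒰 : Set (Set K) := U '' (t : Set ↥Atop) with h𝒰
    have h𝒰wit : 𝒰 ∈ Wit UU := by
      refine ⟨?_, (t.finite_toSet.image U), ?_⟩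
      · rintro S ⟨a, hat, rfl⟩
        have haA : (a : K) ∈ UU := by
          refine mem_iUnion.2 ⟨⟨st a, Set.mem_Iio.2 (Order.lt_succ_of_le (Finset.le_sup hat))⟩, ?_⟩
          exact hst2 a
        exact mem_biUnion haA (hUb a)
      · intro hcu
        have : x ∈ ⋃₀ 𝒰 := hcu ▸ mem_univ x
        obtain ⟨S, ⟨a, _, rfl⟩, hxS⟩ := this
        exact (hUx a hxS) rfl
    have hwin : w 𝒰 ∈ A (Order.succ o1) := by
      rw [hA, iterSet_def]
      rw [hstepdef]
      exact subset_closure (mem_union_right _ (mem_image_of_mem w h𝒰wit))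
    have hwA : w 𝒰 ∈ Atop := hAsub _ (hlim.succ_lt ho1top) hwin
    have : w 𝒰 ∈ ⋃₀ 𝒰 := by
      obtain ⟨a, hat, haU⟩ := mem_iUnion₂.1 (ht hwA)
      exact ⟨U a, ⟨a, hat, rfl⟩, haU⟩
    exact hw 𝒰 h𝒰wit.2.2 this
  have hAtopcard : #Atop ≤ μ := by
    calc #Atop ≤ top.card * μ := mk_iUnion_Iio_le _ top hAcard
      _ = (Order.succ lam) * μ := by rw [htop, Cardinal.card_ord]
      _ ≤ μ * μ := by
          refine mul_le_mul' ?_ le_rfl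
          exact (Order.succ_le_iff.2 (cantor lam))
      _ = μ := mul_eq_self hμinf
  calc #K = #(Set.univ : Set K) := mk_univ.symm
    _ = #Atop := by rw [huniv]
    _ ≤ μ := hAtopcard

end Aux

theorem stmt12 (X : Type u) [TopologicalSpace X] [T2Space X] [LocallyCompactSpace X] :
    #X ≤ wLdeg X ^ pseudoChar X := by
  -- the two cardinal invariants belong to their defining sets
  have hpc : pseudoChar X ∈ {κ | ℵ₀ ≤ κ ∧ ∀ x : X, ∃ 𝒱 : Set (Set X), #𝒱 ≤ κ ∧
      (∀ V ∈ 𝒱, IsOpen V ∧ x ∈ V) ∧ ⋂₀ 𝒱 = {x}} := by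
    apply csInf_mem
    refine ⟨max ℵ₀ #(Set X), le_max_left _ _, fun x => ?_⟩
    refine ⟨{U : Set X | IsOpen U ∧ x ∈ U}, (mk_set_le _).trans (le_max_right _ _),
      fun V hV => hV, ?_⟩
    apply Subset.antisymm
    · intro y hy
      rw [mem_singleton_iff]
      by_contra hne
      have hyy : y ∈ ({y}ᶜ : Set X) :=
        mem_sInter.1 hy {y}ᶜ ⟨isOpen_compl_singleton, by simpa using (Ne.symm hne)⟩
      simp at hyy
    · rintro y rfl
      exact mem_sInter.2 fun U hU => hU.2
  have hwl : wLdeg X ∈ {κ | ℵ₀ ≤ κ ∧ ∀ 𝒰 : Set (Set X), IsOpenCover X 𝒰 →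
      ∃ 𝒱 ⊆ 𝒰, #𝒱 ≤ κ ∧ Dense (⋃₀ 𝒱)} := by
    apply csInf_mem
    refine ⟨max ℵ₀ #(Set X), le_max_left _ _, fun 𝒰 h𝒰 => ?_⟩
    refine ⟨𝒰, subset_rfl, (mk_set_le _).trans (le_max_right _ _), ?_⟩
    rw [h𝒰.2]
    exact dense_univ
  obtain ⟨hlam, hpsi⟩ := hpc
  obtain ⟨hkap, hWL⟩ := hwl
  set lam := pseudoChar X
  set kap := wLdeg X
  have hbase : HasSmallBase X lam := smallBase_of_pseudo hlam hpsi
  -- cover by open sets with compact closures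
  set 𝒞 : Set (Set X) := {U : Set X | IsOpen U ∧ IsCompact (closure U)} with h𝒞
  have hcov : IsOpenCover X 𝒞 := by
    refine ⟨fun U hU => hU.1, ?_⟩
    apply Subset.antisymm (subset_univ _)
    intro x _
    obtain ⟨K, hKc, hKn⟩ := exists_compact_mem_nhds x
    refine ⟨interior K, ⟨isOpen_interior, ?_⟩, mem_interior_iff_mem_nhds.2 hKn⟩
    exact hKc.of_isClosed_subset isClosed_closure
      (closure_minimal interior_subset hKc.isClosed)
  obtain ⟨𝒱, h𝒱sub, h𝒱card, h𝒱dense⟩ := hWL 𝒞 hcov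
  -- each member of 𝒱 is small
  have hVsmall : ∀ V : ↥𝒱, #(V : Set X) ≤ 2 ^ lam := by
    intro V
    have hc : IsCompact (closure (V : Set X)) := (h𝒱sub V.2).2
    have : CompactSpace ↥(closure (V : Set X)) := isCompact_iff_compactSpace.1 hc
    calc #(V : Set X) ≤ #(closure (V : Set X)) := mk_le_mk_of_subset subset_closure
      _ ≤ 2 ^ lam := compact_card_le hlam (smallBase_subtype hbase _)
  have hD : #(⋃₀ 𝒱) ≤ kap * 2 ^ lam := by
    rw [sUnion_eq_iUnion]
    calc #(⋃ V : ↥𝒱, (V : Set X)) ≤ #↥𝒱 * (2 ^ lam) := by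
          refine (mk_iUnion_le _).trans (mul_le_mul' le_rfl ?_)
          cases isEmpty_or_nonempty ↥𝒱
          · simp [ciSup_of_empty]
          · exact ciSup_le' hVsmall
      _ ≤ kap * 2 ^ lam := mul_le_mul' h𝒱card le_rfl
  -- arithmetic
  have h2kap : (2 : Cardinal.{u}) ≤ kap := le_trans (by exact_mod_cast (nat_lt_aleph0 2).le) hkap
  have hkk : kap * 2 ^ lam ≤ kap ^ lam := by
    calc kap * 2 ^ lam ≤ kap ^ lam * kap ^ lam :=
          mul_le_mul' (self_le_power kap (one_le_aleph0.trans hlam))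
            (power_le_power_right h2kap)
      _ = kap ^ (lam + lam) := (power_add kap lam lam).symm
      _ = kap ^ lam := by rw [add_eq_self hlam]
  have hkap_inf : ℵ₀ ≤ kap ^ lam := hkap.trans (self_le_power kap (one_le_aleph0.trans hlam))
  calc #X = #(Set.univ : Set X) := mk_univ.symm
    _ = #(closure (⋃₀ 𝒱)) := by rw [h𝒱dense.closure_eq]
    _ ≤ (max #(⋃₀ 𝒱) ℵ₀) ^ lam := sapirovskii hlam hbase _
    _ ≤ (kap ^ lam) ^ lam := by
        refine power_le_power_right (max_le (hD.trans hkk) hkap_inf)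
    _ = kap ^ (lam * lam) := by rw [power_mul]
    _ = kap ^ lam := by rw [mul_eq_self hlam]
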